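/- Let S = ⊕_{i∈ℤ} S_i be an epsilon-strongly ℤ-graded ring with principal component R = S_0. If R is left noetherian, then S is left noetherian. -/

import Mathlib

open Pointwise

/-- `A` is a `ℤ`-grading of the ring `S`: `S` is the internal direct sum of the
additive subgroups `A i`, and `A i * A j ⊆ A (i + j)` for all `i j : ℤ`. -/
def IsZGrading {S : Type*} [Ring S] (A : ℤ → AddSubgroup S) : Prop :=
  DirectSum.IsInternal A ∧ ∀ i j : ℤ, ∀ x ∈ A i, ∀ y ∈ A j, x * y ∈ A (i + j)

/-- The `ℤ`-grading `A` is epsilon-strong: it is symmetric (`A i * A (-i) * A i = A i`)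
and for every `i` there is `ε i ∈ A i * A (-i)` acting as a left identity on `A i`, with
`ε (-i)` acting as a right identity on `A i`.  Here `P * Q` denotes the additive subgroup
generated by products of elements of `P` and `Q`. -/
def IsEpsilonStrongZ {S : Type*} [Ring S] (A : ℤ → AddSubgroup S) : Prop :=
  (∀ i : ℤ, A i * A (-i) * A i = A i) ∧
  ∃ ε : ℤ → S, ∀ i : ℤ, ε i ∈ A i * A (-i) ∧ ∀ x ∈ A i, ε i * x = x ∧ x * ε (-i) = x

section Helpers

variable {S : Type*} [Ring S]

/-- Elements of a pointwise product of additive subgroups are finite sums of products. -/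
lemma exists_list_of_mem_mul {P Q : AddSubgroup S} {e : S} (he : e ∈ P * Q) :
    ∃ L : List (S × S), (∀ p ∈ L, p.1 ∈ P ∧ p.2 ∈ Q) ∧
      e = (L.map fun p => p.1 * p.2).sum := by
  have he' : e ∈ P.toAddSubmonoid * Q.toAddSubmonoid := by
    rw [← AddSubgroup.mul_toAddSubmonoid]; exact he
  refine AddSubmonoid.mul_induction_on he' ?_ ?_
  · intro m hm n hn
    exact ⟨[(m, n)], by simpa using ⟨hm, hn⟩, by simp⟩
  · rintro x y ⟨L₁, h₁, rfl⟩ ⟨L₂, h₂, rfl⟩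
    refine ⟨L₁ ++ L₂, ?_, by simp⟩
    intro p hp
    rcases List.mem_append.mp hp with h | h
    · exact h₁ p h
    · exact h₂ p h

variable (π : ℤ → S →+ S)

/-- A uniform support bound for all elements of a finite set. -/
lemma finset_support_bound
    (hfin : ∀ x : S, ∃ b : ℤ, 0 ≤ b ∧ ∀ i : ℤ, (i < -b ∨ b < i) → π i x = 0)
    (G : Finset S) :
    ∃ b : ℤ, 0 ≤ b ∧ ∀ g ∈ G, ∀ i : ℤ, (i < -b ∨ b < i) → π i g = 0 := by
  classical
  induction G using Finset.cons_induction with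
  | empty => exact ⟨0, le_refl _, by simp⟩
  | cons g G hg ih =>
    obtain ⟨b, hb0, hb⟩ := ih
    obtain ⟨c, hc0, hc⟩ := hfin g
    refine ⟨max b c, le_trans hb0 (le_max_left _ _), ?_⟩
    intro x hx i hi
    rcases Finset.mem_cons.mp hx with rfl | hx
    · exact hc i (by omega)
    · exact hb x hx i (by omega)

end Helpers

section Core

variable {S : Type*} [Ring S]

/-- The core top-degree reduction lemma: there is a finite subset `G` of the left ideal `I`
and a width `D` such that the top homogeneous component (in degree `n ≥ 0`) of any element of
`I` with support bounded above by `n` is matched by an element of the left ideal generated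
by `G` whose support lies in `[n - D, n]`. -/
lemma core_reduction (A : ℤ → AddSubgroup S) (R : Subring S) (π : ℤ → S →+ S)
    (h1 : ∀ (i : ℤ) (x : S), π i x ∈ A i)
    (hfin : ∀ x : S, ∃ b : ℤ, 0 ≤ b ∧ ∀ i : ℤ, (i < -b ∨ b < i) → π i x = 0)
    (hm : ∀ (d i : ℤ) (c : S), c ∈ A d → ∀ x : S, π (d + i) (c * x) = c * π i x)
    (hAmul : ∀ i j : ℤ, ∀ x ∈ A i, ∀ y ∈ A j, x * y ∈ A (i + j))
    (hRA : ∀ r : R, (r : S) ∈ A 0)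
    (hfg : ∀ W : Submodule R S, (∀ w ∈ W, w ∈ A 0) → W.FG)
    (ε : ℤ → S) (hε1 : ∀ i : ℤ, ε i ∈ A i * A (-i))
    (hε2 : ∀ i : ℤ, ∀ x ∈ A i, ε i * x = x)
    (I : Submodule S S) :
    ∃ (D : ℤ) (G : Finset S), 0 ≤ D ∧ (↑G : Set S) ⊆ (I : Set S) ∧
      ∀ n : ℤ, 0 ≤ n → ∀ x ∈ I, (∀ i : ℤ, n < i → π i x = 0) →
        ∃ z ∈ Submodule.span S (G : Set S),
          (∀ i : ℤ, n < i → π i z = 0) ∧ (∀ i : ℤ, i < n - D → π i z = 0) ∧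
          π n z = π n x := by
  classical
  -- the set of "transported leading coefficients"
  set Wgen : ℤ → Set S := fun n =>
    {w | ∃ a x : S, a ∈ A (-n) ∧ x ∈ I ∧ (∀ i : ℤ, n < i → π i x = 0) ∧ w = a * π n x}
    with hWgen
  set Wall : Set S := ⋃ n : ℕ, Wgen (n : ℤ) with hWall
  set Csup : Submodule R S := Submodule.span R Wall with hCsup
  have hRsmul : ∀ (r : R) (x : S), r • x = (r : S) * x := fun r x => rfl
  have hWsub : ∀ w ∈ Wall, w ∈ A 0 := by
    rintro w hw
    obtain ⟨n, hn⟩ := Set.mem_iUnion.mp hw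
    obtain ⟨a, x, ha, -, -, rfl⟩ := hn
    have := hAmul (-(n : ℤ)) n a ha (π n x) (h1 n x)
    rwa [show (-(n:ℤ) + n) = 0 by ring] at this
  have hCsub : ∀ w ∈ Csup, w ∈ A 0 := by
    intro w hw
    refine Submodule.span_induction (p := fun w _ => w ∈ A 0) ?_ ?_ ?_ ?_ hw
    · exact hWsub
    · exact (A 0).zero_mem
    · intro x y _ _ hx hy; exact (A 0).add_mem hx hy
    · intro r x _ hx
      rw [hRsmul]
      have := hAmul 0 0 (r : S) (hRA r) x hx
      rwa [add_zero] at this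
  obtain ⟨T, hT⟩ := hfg Csup hCsub
  -- choose representatives in `I` for the generators of `Csup`
  have hgoodAll : ∀ t ∈ Csup, ∃ z : S, z ∈ I ∧ (∀ i : ℤ, 0 < i → π i z = 0) ∧ π 0 z = t := by
    intro t ht
    refine Submodule.span_induction
      (p := fun t _ => ∃ z : S, z ∈ I ∧ (∀ i : ℤ, 0 < i → π i z = 0) ∧ π 0 z = t)
      ?_ ?_ ?_ ?_ ht
    · rintro w hw
      obtain ⟨n, hn⟩ := Set.mem_iUnion.mp hw
      obtain ⟨a, x, ha, hxI, hxs, rfl⟩ := hn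
      refine ⟨a * x, ?_, ?_, ?_⟩
      · have := I.smul_mem a hxI; rwa [smul_eq_mul] at this
      · intro i hi
        have h := hm (-(n:ℤ)) (i + n) a ha x
        rw [show (-(n:ℤ) + (i + n)) = i by ring] at h
        rw [h, hxs (i + n) (by omega), mul_zero]
      · have h := hm (-(n:ℤ)) n a ha x
        rwa [show (-(n:ℤ) + n) = 0 by ring] at h
    · exact ⟨0, I.zero_mem, by simp, by simp⟩
    · rintro x y _ _ ⟨z₁, hz₁, hs₁, hv₁⟩ ⟨z₂, hz₂, hs₂, hv₂⟩
      refine ⟨z₁ + z₂, I.add_mem hz₁ hz₂, ?_, by rw [map_add, hv₁, hv₂]⟩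
      intro i hi; rw [map_add, hs₁ i hi, hs₂ i hi, add_zero]
    · rintro r x _ ⟨z, hz, hs, hv⟩
      refine ⟨(r : S) * z, ?_, ?_, ?_⟩
      · have := I.smul_mem (r : S) hz; rwa [smul_eq_mul] at this
      · intro i hi
        have h := hm 0 i (r : S) (hRA r) z
        rw [zero_add] at h
        rw [h, hs i hi, mul_zero]
      · have h := hm 0 0 (r : S) (hRA r) z
        rw [zero_add] at h
        rw [hRsmul, h, hv]
  have hTmem : ∀ t : {x // x ∈ T}, (t : S) ∈ Csup := fun t =>
    hT ▸ Submodule.subset_span t.2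
  choose zf hzI hzs hzv using fun t : {x // x ∈ T} => hgoodAll t (hTmem t)
  set G : Finset S := T.attach.image zf with hG
  have hGI : (↑G : Set S) ⊆ (I : Set S) := by
    intro g hg
    obtain ⟨t, -, rfl⟩ := Finset.mem_image.mp hg
    exact hzI t
  obtain ⟨D, hD0, hDb⟩ := finset_support_bound π hfin G
  refine ⟨D, G, hD0, hGI, ?_⟩
  -- every element of `Csup` is the `0`-component of an element of `span S G`
  -- with support in `[-D, 0]`
  have key : ∀ c ∈ Csup, ∃ z ∈ Submodule.span S (G : Set S),
      (∀ i : ℤ, 0 < i → π i z = 0) ∧ (∀ i : ℤ, i < -D → π i z = 0) ∧ π 0 z = c := by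
    intro c hc
    rw [← hT] at hc
    refine Submodule.span_induction (p := fun c _ => ∃ z ∈ Submodule.span S (G : Set S),
      (∀ i : ℤ, 0 < i → π i z = 0) ∧ (∀ i : ℤ, i < -D → π i z = 0) ∧ π 0 z = c)
      ?_ ?_ ?_ ?_ hc
    · intro t ht
      have htG : zf ⟨t, ht⟩ ∈ G := Finset.mem_image.mpr ⟨⟨t, ht⟩, Finset.mem_attach _ _, rfl⟩
      refine ⟨zf ⟨t, ht⟩, Submodule.subset_span htG, hzs _, ?_, hzv _⟩
      intro i hi
      exact hDb _ htG i (by omega)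
    · exact ⟨0, Submodule.zero_mem _, by simp, by simp, by simp⟩
    · rintro x y _ _ ⟨z₁, hsp₁, hs₁, hl₁, hv₁⟩ ⟨z₂, hsp₂, hs₂, hl₂, hv₂⟩
      refine ⟨z₁ + z₂, Submodule.add_mem _ hsp₁ hsp₂, ?_, ?_, by rw [map_add, hv₁, hv₂]⟩
      · intro i hi; rw [map_add, hs₁ i hi, hs₂ i hi, add_zero]
      · intro i hi; rw [map_add, hl₁ i hi, hl₂ i hi, add_zero]
    · rintro r x _ ⟨z, hsp, hs, hl, hv⟩
      refine ⟨(r : S) * z, ?_, ?_, ?_, ?_⟩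
      · have := Submodule.smul_mem _ (r : S) hsp; rwa [smul_eq_mul] at this
      · intro i hi
        have h := hm 0 i (r : S) (hRA r) z; rw [zero_add] at h
        rw [h, hs i hi, mul_zero]
      · intro i hi
        have h := hm 0 i (r : S) (hRA r) z; rw [zero_add] at h
        rw [h, hl i hi, mul_zero]
      · have h := hm 0 0 (r : S) (hRA r) z; rw [zero_add] at h
        rw [hRsmul, h, hv]
  intro n hn x hxI hxs
  -- all transported leading coefficients of `x` lie in `Csup`
  have hWn : ∀ v ∈ A (-n), v * π n x ∈ Csup := by
    intro v hv
    refine Submodule.subset_span (Set.mem_iUnion.mpr ⟨n.toNat, ?_⟩)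
    show v * π n x ∈ Wgen ((n.toNat : ℤ))
    rw [Int.toNat_of_nonneg hn]
    exact ⟨v, x, hv, hxI, hxs, rfl⟩
  -- multiplication induction over `ε n ∈ A n * A (-n)`
  have hεmem : ε n ∈ (A n).toAddSubmonoid * (A (-n)).toAddSubmonoid := by
    rw [← AddSubgroup.mul_toAddSubmonoid]; exact hε1 n
  have main : ∀ e ∈ (A n).toAddSubmonoid * (A (-n)).toAddSubmonoid,
      ∃ z ∈ Submodule.span S (G : Set S),
        (∀ i : ℤ, n < i → π i z = 0) ∧ (∀ i : ℤ, i < n - D → π i z = 0) ∧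
        π n z = e * π n x := by
    intro e he
    refine AddSubmonoid.mul_induction_on he ?_ ?_
    · intro u hu v hv
      obtain ⟨zh, hsp, hs, hl, hv0⟩ := key (v * π n x) (hWn v hv)
      refine ⟨u * zh, ?_, ?_, ?_, ?_⟩
      · have := Submodule.smul_mem _ u hsp; rwa [smul_eq_mul] at this
      · intro i hi
        have h := hm n (i - n) u hu zh
        rw [show (n + (i - n)) = i by ring] at h
        rw [h, hs (i - n) (by omega), mul_zero]
      · intro i hi
        have h := hm n (i - n) u hu zh
        rw [show (n + (i - n)) = i by ring] at h
        rw [h, hl (i - n) (by omega), mul_zero]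
      · have h := hm n 0 u hu zh
        rw [add_zero] at h
        rw [h, hv0, mul_assoc]
    · rintro a b ⟨z₁, hsp₁, hs₁, hl₁, hv₁⟩ ⟨z₂, hsp₂, hs₂, hl₂, hv₂⟩
      refine ⟨z₁ + z₂, Submodule.add_mem _ hsp₁ hsp₂, ?_, ?_, ?_⟩
      · intro i hi; rw [map_add, hs₁ i hi, hs₂ i hi, add_zero]
      · intro i hi; rw [map_add, hl₁ i hi, hl₂ i hi, add_zero]
      · rw [map_add, hv₁, hv₂, add_mul]
  obtain ⟨z, hsp, hs, hl, hv⟩ := main (ε n) hεmem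
  exact ⟨z, hsp, hs, hl, by rw [hv, hε2 n (π n x) (h1 n x)]⟩

end Core

section Iterate

variable {S : Type*} [Ring S]

/-- Iterating the core reduction: any element of `I` with support in `[-b, k]`
is congruent, modulo the left ideal generated by `G`, to an element of `I` with
support in `[-b, 0]`. -/
lemma iterate_reduction (π : ℤ → S →+ S) (I : Submodule S S) (Gset : Set S) (D : ℤ)
    (hGI : Gset ⊆ (I : Set S))
    (hred : ∀ n : ℤ, 0 ≤ n → ∀ x ∈ I, (∀ i : ℤ, n < i → π i x = 0) →
      ∃ z ∈ Submodule.span S Gset,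
        (∀ i : ℤ, n < i → π i z = 0) ∧ (∀ i : ℤ, i < n - D → π i z = 0) ∧ π n z = π n x) :
    ∀ (k : ℕ) (b : ℤ), D ≤ b → ∀ x ∈ I, (∀ i : ℤ, i < -b → π i x = 0) →
      (∀ i : ℤ, (k : ℤ) < i → π i x = 0) →
      ∃ z ∈ Submodule.span S Gset,
        (∀ i : ℤ, 0 < i → π i (x - z) = 0) ∧ (∀ i : ℤ, i < -b → π i (x - z) = 0) := by
  intro k
  induction k with
  | zero =>
    intro b hb x hxI hlo hhi
    refine ⟨0, Submodule.zero_mem _, ?_, ?_⟩ <;> intro i hi <;> rw [sub_zero]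
    · exact hhi i (by exact_mod_cast hi)
    · exact hlo i hi
  | succ k ih =>
    intro b hb x hxI hlo hhi
    obtain ⟨z₁, hsp₁, hs₁, hl₁, hv₁⟩ := hred ((k : ℤ) + 1) (by omega) x hxI
      (fun i hi => hhi i (by push_cast; omega))
    have hz₁I : z₁ ∈ I := Submodule.span_le.mpr hGI hsp₁
    have hyI : x - z₁ ∈ I := I.sub_mem hxI hz₁I
    have hyhi : ∀ i : ℤ, (k : ℤ) < i → π i (x - z₁) = 0 := by
      intro i hi
      rw [map_sub]
      rcases eq_or_lt_of_le (by omega : (k : ℤ) + 1 ≤ i) with h | h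
      · rw [← h, hv₁, sub_self]
      · rw [hhi i (by push_cast; omega), hs₁ i h, sub_zero]
    have hylo : ∀ i : ℤ, i < -b → π i (x - z₁) = 0 := by
      intro i hi
      rw [map_sub, hlo i hi, hl₁ i (by omega), sub_zero]
    obtain ⟨z₂, hsp₂, hs₂, hl₂⟩ := ih b hb (x - z₁) hyI hylo hyhi
    refine ⟨z₁ + z₂, Submodule.add_mem _ hsp₁ hsp₂, ?_, ?_⟩ <;> intro i hi <;>
      rw [sub_add_eq_sub_sub]
    · exact hs₂ i hi
    · exact hl₂ i hi

end Iterate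

/-- If `S` is an epsilon-strongly `ℤ`-graded ring whose principal component `R = S_0` is
left noetherian, then `S` is left noetherian. -/
theorem epsilonStrongZ_left_noetherian
    {S : Type*} [Ring S] (A : ℤ → AddSubgroup S)
    (hgrading : IsZGrading A) (heps : IsEpsilonStrongZ A)
    (R : Subring S) (hR : (R : Set S) = (A 0 : Set S))
    (hRnoeth : IsNoetherianRing R) :
    IsNoetherianRing S := by
  classical
  obtain ⟨hint, hAmul⟩ := hgrading
  obtain ⟨-, ε, hε⟩ := heps
  haveI : IsNoetherianRing R := hRnoeth
  haveI : DirectSum.Decomposition A := hint.chooseDecomposition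
  -- homogeneous projections
  set π : ℤ → S →+ S := fun i =>
    { toFun := fun x => (DirectSum.decompose A x i : S)
      map_zero' := by simp
      map_add' := fun x y => by simp }
    with hπdef
  have hπ : ∀ (i : ℤ) (x : S), π i x = (DirectSum.decompose A x i : S) := fun i x => rfl
  have h1 : ∀ (i : ℤ) (x : S), π i x ∈ A i := fun i x => (DirectSum.decompose A x i).2
  have hsupp0 : ∀ (x : S) (i : ℤ), i ∉ (DirectSum.decompose A x).support → π i x = 0 := by
    intro x i hi
    rw [hπ, DFinsupp.notMem_support_iff.mp hi, ZeroMemClass.coe_zero]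
  -- reconstruction from projections
  have hsum : ∀ (x : S) (s : Finset ℤ), (∀ i ∉ s, π i x = 0) → ∑ i ∈ s, π i x = x := by
    intro x s hs
    have hkey : ∑ i ∈ (DirectSum.decompose A x).support, π i x = x := by
      conv_rhs => rw [← DirectSum.sum_support_decompose A x]
      exact Finset.sum_congr rfl fun i _ => hπ i x
    calc ∑ i ∈ s, π i x = ∑ i ∈ s ∪ (DirectSum.decompose A x).support, π i x := by
          refine Finset.sum_subset Finset.subset_union_left fun i _ hi => hs i hi
      _ = ∑ i ∈ (DirectSum.decompose A x).support, π i x := by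
          refine (Finset.sum_subset Finset.subset_union_right fun i _ hi => hsupp0 x i hi).symm
      _ = x := hkey
  -- support bound for a single element
  have hfin : ∀ x : S, ∃ b : ℤ, 0 ≤ b ∧ ∀ i : ℤ, (i < -b ∨ b < i) → π i x = 0 := by
    intro x
    refine ⟨∑ j ∈ (DirectSum.decompose A x).support, |j|,
      Finset.sum_nonneg fun j _ => abs_nonneg j, ?_⟩
    intro i hi
    refine hsupp0 x i fun hmem => ?_
    have hb : |i| ≤ ∑ j ∈ (DirectSum.decompose A x).support, |j| :=
      Finset.single_le_sum (f := fun j => |j|) (fun j _ => abs_nonneg j) hmem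
    have h2 := abs_le.mp hb
    omega
  -- projections interact with left multiplication by homogeneous elements
  have hm : ∀ (d i : ℤ) (c : S), c ∈ A d → ∀ x : S, π (d + i) (c * x) = c * π i x := by
    intro d i₀ c hc x
    set u := DirectSum.decompose A x with hu
    set DD : DirectSum ℤ (fun i => A i) :=
      ∑ i ∈ u.support, DirectSum.of (fun j : ℤ => A j) (d + i)
        ⟨c * π i x, hAmul d i c hc (π i x) (h1 i x)⟩ with hDD
    have hsymmDD : (DirectSum.decompose A).symm DD = c * x := by
      rw [hDD, DirectSum.decompose_symm_sum]
      simp_rw [DirectSum.decompose_symm_of]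
      rw [← Finset.mul_sum]
      congr 1
      exact hsum x u.support (fun i hi => hsupp0 x i hi)
    have hDx : DirectSum.decompose A (c * x) = DD := by
      rw [← hsymmDD, Equiv.apply_symm_apply]
    rw [hπ, hDx, hDD, DFinsupp.finset_sum_apply, AddSubmonoidClass.coe_finset_sum]
    have hterm : ∀ i ∈ u.support,
        ((DirectSum.of (fun j : ℤ => A j) (d + i)
          ⟨c * π i x, hAmul d i c hc (π i x) (h1 i x)⟩) (d + i₀) : S)
        = if i = i₀ then c * π i x else 0 := by
      intro i _
      rw [DirectSum.coe_of_apply]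
      simp only [add_right_inj]
      split_ifs <;> simp
    rw [Finset.sum_congr rfl hterm, Finset.sum_ite_eq' u.support i₀ (fun i => c * π i x)]
    by_cases hmem : i₀ ∈ u.support
    · rw [if_pos hmem]
    · rw [if_neg hmem, hsupp0 x i₀ hmem, mul_zero]
  -- basic facts relating `R` and `A 0`
  have hRA : ∀ r : R, (r : S) ∈ A 0 := by
    intro r
    have h : (r : S) ∈ (R : Set S) := r.2
    rwa [hR] at h
  have hAR : ∀ s : S, s ∈ A 0 → s ∈ R := by
    intro s hs
    have h : s ∈ (A 0 : Set S) := hs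
    rw [← hR] at h
    exact h
  have hRsmul : ∀ (r : R) (x : S), r • x = (r : S) * x := fun r x => rfl
  -- `R`-submodules of `S` contained in `A 0` are finitely generated
  have hfg : ∀ W : Submodule R S, (∀ w ∈ W, w ∈ A 0) → W.FG := by
    intro W hW
    let lin : R →ₗ[R] S :=
      { toFun := fun r => (r : S)
        map_add' := fun a b => rfl
        map_smul' := fun r a => rfl }
    have hle : W ≤ LinearMap.range lin := by
      intro w hw
      exact ⟨⟨w, hAR w (hW w hw)⟩, rfl⟩
    have hJ : (Submodule.comap lin W).FG := IsNoetherian.noetherian _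
    have hmap := hJ.map lin
    rwa [Submodule.map_comap_eq_self hle] at hmap
  rw [isNoetherianRing_iff, isNoetherian_def]
  intro I
  -- top reduction data
  obtain ⟨D₁, G₁, hD₁, hG₁I, hred₁⟩ := core_reduction A R π h1 hfin hm hAmul hRA hfg
    ε (fun i => (hε i).1) (fun i x hx => ((hε i).2 x hx).1) I
  -- bottom reduction data (mirrored grading)
  obtain ⟨D₂, G₂, hD₂, hG₂I, hred₂⟩ := core_reduction (fun i => A (-i)) R (fun i => π (-i))
    (fun i x => h1 (-i) x)
    (fun x => by
      obtain ⟨b, hb0, hb⟩ := hfin x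
      exact ⟨b, hb0, fun i hi => hb (-i) (by omega)⟩)
    (fun d i c hc x => by
      have h := hm (-d) (-i) c hc x
      rwa [show (-d + -i) = -(d + i) by ring] at h)
    (fun i j x hx y hy => by
      have h := hAmul (-i) (-j) x hx y hy
      rwa [show (-i + -j) = -(i + j) by ring] at h)
    (fun r => by simpa using hRA r)
    (fun W hW => hfg W (fun w hw => by simpa using hW w hw))
    (fun i => ε (-i))
    (fun i => (hε (-i)).1)
    (fun i x hx => ((hε (-i)).2 x hx).1)
    I
  have hiter₁ := iterate_reduction π I (G₁ : Set S) D₁ hG₁I hred₁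
  have hiter₂ := iterate_reduction (fun i => π (-i)) I (G₂ : Set S) D₂ hG₂I hred₂
  -- a uniform support bound for the generators
  obtain ⟨B, hB0, hBb⟩ := finset_support_bound π hfin (G₁ ∪ G₂)
  set N₃ : ℤ := max B D₂ with hN₃
  have hN₃0 : 0 ≤ N₃ := le_trans hB0 (le_max_left _ _)
  -- the `R`-submodule of elements supported in `[-N₃, N₃]`
  set F : Submodule R S :=
    { carrier := {x : S | ∀ i : ℤ, (i < -N₃ ∨ N₃ < i) → π i x = 0}
      add_mem' := fun {x y} hx hy i hi => by
        rw [map_add, hx i hi, hy i hi, add_zero]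
      zero_mem' := fun i _ => map_zero _
      smul_mem' := fun r x hx => by
        intro i hi
        rw [hRsmul]
        have h := hm 0 i (r : S) (hRA r) x
        rw [zero_add] at h
        rw [h, hx i hi, mul_zero] } with hF
  -- the homogeneous pieces as `R`-submodules, and their finite generation
  set Mi : ℤ → Submodule R S := fun i =>
    { carrier := A i
      add_mem' := fun {x y} hx hy => (A i).add_mem hx hy
      zero_mem' := (A i).zero_mem
      smul_mem' := fun r x hx => by
        rw [hRsmul]
        have h := hAmul 0 i (r : S) (hRA r) x hx
        rwa [zero_add] at h } with hMi
  have hMiFG : ∀ i : ℤ, (Mi i).FG := by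
    intro i
    have h0 := (hε (-i)).1
    rw [neg_neg] at h0
    obtain ⟨L, hL, hLsum⟩ := exists_list_of_mem_mul h0
    refine ⟨(L.map Prod.snd).toFinset, ?_⟩
    apply le_antisymm
    · rw [Submodule.span_le]
      intro y hy
      rw [List.coe_toFinset] at hy
      obtain ⟨p, hp, rfl⟩ := List.mem_map.mp hy
      exact (hL p hp).2
    · intro x hx
      have hx' : x ∈ A i := hx
      have hkey : ∀ L' : List (S × S), (∀ p ∈ L', p ∈ L) →
          x * ((L'.map fun p => p.1 * p.2).sum) ∈
            Submodule.span R (((L.map Prod.snd).toFinset : Finset S) : Set S) := by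
        intro L' hL'
        induction L' with
        | nil => simp
        | cons p L'' ih =>
          rw [List.map_cons, List.sum_cons, mul_add]
          refine Submodule.add_mem _ ?_ (ih fun q hq => hL' q (List.mem_cons_of_mem p hq))
          have hpL : p ∈ L := hL' p List.mem_cons_self
          have hxp : x * p.1 ∈ A 0 := by
            have h := hAmul i (-i) x hx' p.1 (hL p hpL).1
            rwa [show (i + -i) = 0 by ring] at h
          have hp2 : p.2 ∈ (((L.map Prod.snd).toFinset : Finset S) : Set S) := by
            rw [List.coe_toFinset]
            exact List.mem_map.mpr ⟨p, hpL, rfl⟩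
          have hsm := Submodule.smul_mem
            (Submodule.span R (((L.map Prod.snd).toFinset : Finset S) : Set S))
            (⟨x * p.1, hAR _ hxp⟩ : R) (Submodule.subset_span hp2)
          rw [hRsmul] at hsm
          have hcoe : ((⟨x * p.1, hAR _ hxp⟩ : R) : S) = x * p.1 := rfl
          rw [hcoe] at hsm
          rw [← mul_assoc]
          exact hsm
      have hid : x * ε (-i) = x := ((hε i).2 x hx').2
      have hfinal := hkey L (fun p hp => hp)
      rw [← hLsum, hid] at hfinal
      exact hfinal
  -- the sum of the pieces in the window, and the window submodule of `I`
  set Msum : Submodule R S := ⨆ j ∈ Finset.Icc (-N₃) N₃, Mi j with hMsum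
  have hMsumFG : Msum.FG := Submodule.fg_biSup _ _ (fun j _ => hMiFG j)
  set X : Submodule R S := I.restrictScalars R ⊓ F with hX
  have hXle : X ≤ Msum := by
    rintro x ⟨hxI, hxF⟩
    have hrep := hsum x ((DirectSum.decompose A x).support) (fun i hi => hsupp0 x i hi)
    rw [← hrep]
    refine Submodule.sum_mem _ ?_
    intro j hj
    by_cases hzero : π j x = 0
    · rw [hzero]; exact Submodule.zero_mem _
    · have hjmem : j ∈ Finset.Icc (-N₃) N₃ := by
        rw [Finset.mem_Icc]
        by_contra hcon
        exact hzero (hxF j (by omega))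
      exact le_biSup Mi hjmem (h1 j x)
  have hXFG : X.FG := by
    haveI := isNoetherian_of_fg_of_noetherian Msum hMsumFG
    have hc : (Submodule.comap Msum.subtype X).FG := IsNoetherian.noetherian _
    have hmp := hc.map Msum.subtype
    rwa [Submodule.map_comap_subtype, inf_eq_right.mpr hXle] at hmp
  -- every element of `I` lies in the left ideal generated by `X`
  have hdecomp : ∀ x ∈ I, x ∈ Submodule.span S (X : Set S) := by
    intro x hxI
    obtain ⟨b₀, hb₀0, hb₀⟩ := hfin x
    obtain ⟨z₁, hsp₁, hs₁, hl₁⟩ := hiter₁ b₀.toNat (max b₀ D₁) (le_max_right _ _) x hxI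
      (fun i hi => hb₀ i (Or.inl (by omega)))
      (fun i hi => hb₀ i (Or.inr (by rwa [Int.toNat_of_nonneg hb₀0] at hi)))
    have hz₁I : z₁ ∈ I := Submodule.span_le.mpr hG₁I hsp₁
    have hyI : x - z₁ ∈ I := I.sub_mem hxI hz₁I
    obtain ⟨z₂, hsp₂, hs₂, hl₂⟩ := hiter₂ (max b₀ D₁).toNat D₂ (le_refl _) (x - z₁) hyI
      (fun i hi => hs₁ (-i) (by omega))
      (fun i hi => hl₁ (-i) (by
        rw [Int.toNat_of_nonneg (by omega : (0:ℤ) ≤ max b₀ D₁)] at hi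
        omega))
    have hz₂I : z₂ ∈ I := Submodule.span_le.mpr hG₂I hsp₂
    have hwX : x - z₁ - z₂ ∈ X := by
      refine ⟨I.sub_mem hyI hz₂I, ?_⟩
      intro i hi
      rcases hi with hi | hi
      · simpa using hs₂ (-i) (by omega)
      · simpa using hl₂ (-i) (by omega)
    have hGsub : ∀ (G : Finset S), (↑G : Set S) ⊆ (I : Set S) → G ⊆ G₁ ∪ G₂ →
        (↑G : Set S) ⊆ (X : Set S) := by
      intro G hGI hGU g hg
      refine ⟨hGI hg, ?_⟩
      intro i hi
      exact hBb g (hGU (Finset.mem_coe.mp hg)) i (by omega)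
    have hz₁X : z₁ ∈ Submodule.span S (X : Set S) :=
      Submodule.span_le.mpr
        (Set.Subset.trans (hGsub G₁ hG₁I Finset.subset_union_left) Submodule.subset_span)
        hsp₁
    have hz₂X : z₂ ∈ Submodule.span S (X : Set S) :=
      Submodule.span_le.mpr
        (Set.Subset.trans (hGsub G₂ hG₂I Finset.subset_union_right) Submodule.subset_span)
        hsp₂
    have hxsum : x = z₁ + (z₂ + (x - z₁ - z₂)) := by abel
    rw [hxsum]
    exact Submodule.add_mem _ hz₁X
      (Submodule.add_mem _ hz₂X (Submodule.subset_span hwX))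
  -- conclude
  obtain ⟨T, hT⟩ := hXFG
  refine ⟨T, le_antisymm ?_ ?_⟩
  · rw [Submodule.span_le]
    intro t ht
    have htX : t ∈ X := hT ▸ Submodule.subset_span ht
    exact htX.1
  · intro x hx
    have hXT : (X : Set S) ⊆ (Submodule.span S (T : Set S) : Set S) := by
      intro w hw
      have hw' : w ∈ Submodule.span R (T : Set S) := by rw [hT]; exact hw
      refine Submodule.span_induction
        (p := fun w _ => w ∈ Submodule.span S (T : Set S)) ?_ ?_ ?_ ?_ hw'
      · exact fun y hy => Submodule.subset_span hy
      · exact Submodule.zero_mem _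
      · exact fun a b _ _ ha hb => Submodule.add_mem _ ha hb
      · intro r a _ ha
        rw [hRsmul]
        have hsm := Submodule.smul_mem (Submodule.span S (T : Set S)) (r : S) ha
        rwa [smul_eq_mul] at hsm
    exact Submodule.span_le.mpr hXT (hdecomp x hx)
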